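/- Let S_n denote the rational number Σ_{b=0}^{2^n−1} 3^(m(b,n)) / 2^n. Then for every n ≥ 1, S_{n+1} = 2 · S_n. -/

import Mathlib

def T (N : ℕ) : ℕ := if N % 2 = 0 then N / 2 else (3 * N + 1) / 2

def m (b n : ℕ) : ℕ := ((Finset.range n).filter (fun k => Odd (T^[k] b))).card

lemma T_even (c : ℕ) : T (2 * c) = c := by
  simp [T, Nat.mul_div_cancel_left]

lemma T_odd (c : ℕ) : T (2 * c + 1) = 3 * c + 2 := by
  unfold T
  rw [if_neg (by omega : ¬ (2 * c + 1) % 2 = 0)]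
  omega

lemma m_zero (x : ℕ) : m x 0 = 0 := by simp [m]

lemma m_step (x k : ℕ) : m x (k + 1) = m x k + (if Odd (T^[k] x) then 1 else 0) := by
  unfold m
  rw [Finset.range_add_one, Finset.filter_insert]
  split
  · rw [Finset.card_insert_of_notMem (by simp)]
  · simp

lemma m_succ (x n : ℕ) : m x (n + 1) = (if Odd x then 1 else 0) + m (T x) n := by
  induction n with
  | zero =>
      rw [m_step, m_zero, m_zero, zero_add, add_zero, Function.iterate_zero_apply]
  | succ k ih =>
      rw [m_step x (k + 1), ih, m_step (T x) k, Function.iterate_succ_apply]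
      ring

lemma lemA : ∀ k x t, T^[k] (x + 2 ^ (k + 1) * t) = T^[k] x + 2 * 3 ^ (m x k) * t := by
  intro k
  induction k with
  | zero => intro x t; simp [m_zero]
  | succ k ih =>
      intro x t
      rw [Function.iterate_succ_apply, Function.iterate_succ_apply]
      rcases Nat.even_or_odd x with he | ho
      · have hx2 : x % 2 = 0 := Nat.even_iff.mp he
        have hT : T (x + 2 ^ (k + 2) * t) = T x + 2 ^ (k + 1) * t := by
          have e : 2 ^ (k + 2) * t = 2 * (2 ^ (k + 1) * t) := by ring
          have h1 : (x + 2 ^ (k + 2) * t) % 2 = 0 := by omega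
          simp only [T, h1, hx2, if_true]
          omega
        have hno : ¬ Odd x := by simpa [Nat.not_odd_iff_even] using he
        rw [hT, ih, m_succ, if_neg hno, zero_add]
      · have hx2 : x % 2 = 1 := Nat.odd_iff.mp ho
        have hT : T (x + 2 ^ (k + 2) * t) = T x + 2 ^ (k + 1) * (3 * t) := by
          have e : 2 ^ (k + 2) * t = 2 * (2 ^ (k + 1) * t) := by ring
          have e2 : 2 ^ (k + 1) * (3 * t) = 3 * (2 ^ (k + 1) * t) := by ring
          have h1 : (x + 2 ^ (k + 2) * t) % 2 = 1 := by omega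
          simp only [T, h1, hx2]
          norm_num
          omega
        rw [hT, ih, m_succ, if_pos ho, pow_add, pow_one]
        ring

lemma lemB (n x t : ℕ) : m (x + 2 ^ n * t) n = m x n := by
  unfold m
  congr 1
  apply Finset.filter_congr
  intro k hk
  have hk' : k < n := Finset.mem_range.mp hk
  have hsplit : 2 ^ n * t = 2 ^ (k + 1) * (2 ^ (n - k - 1) * t) := by
    rw [← mul_assoc, ← pow_add]
    congr 2
    omega
  rw [hsplit, lemA]
  obtain ⟨q, hq⟩ : ∃ q, 2 * 3 ^ m x k * (2 ^ (n - k - 1) * t) = 2 * q := ⟨3 ^ m x k * (2 ^ (n - k - 1) * t), by ring⟩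
  rw [hq]
  simp only [Nat.odd_iff]
  omega

lemma m_mod (n x : ℕ) : m x n = m (x % 2 ^ n) n := by
  conv_lhs => rw [← Nat.mod_add_div x (2 ^ n)]
  rw [lemB]

lemma sum_range_two_mul {M : Type*} [AddCommMonoid M] (f : ℕ → M) :
    ∀ k, ∑ b ∈ Finset.range (2 * k), f b = ∑ c ∈ Finset.range k, (f (2 * c) + f (2 * c + 1)) := by
  intro k
  induction k with
  | zero => simp
  | succ k ih =>
      have h : 2 * (k + 1) = (2 * k + 1) + 1 := by ring
      rw [h, Finset.sum_range_succ, Finset.sum_range_succ, ih, Finset.sum_range_succ]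
      rw [add_assoc]

lemma inj_on (n : ℕ) :
    Set.InjOn (fun c => (3 * c + 2) % 2 ^ n) (Finset.range (2 ^ n)) := by
  intro a ha b hb hab
  simp only [Finset.coe_range, Set.mem_Iio] at ha hb
  have h1 : Nat.ModEq (2 ^ n) (3 * a + 2) (3 * b + 2) := hab
  have h2 : Nat.ModEq (2 ^ n) (3 * a) (3 * b) := Nat.ModEq.add_right_cancel' 2 h1
  have hcop : Nat.Coprime 3 (2 ^ n) := Nat.Coprime.pow_right n (by decide)
  have h3 : Nat.ModEq (2 ^ n) a b := h2.cancel_left_of_coprime (Nat.Coprime.symm hcop)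
  unfold Nat.ModEq at h3
  rwa [Nat.mod_eq_of_lt ha, Nat.mod_eq_of_lt hb] at h3

lemma image_eq (n : ℕ) :
    (Finset.range (2 ^ n)).image (fun c => (3 * c + 2) % 2 ^ n) = Finset.range (2 ^ n) := by
  have hpos : 0 < 2 ^ n := pow_pos (by norm_num) n
  apply Finset.eq_of_subset_of_card_le
  · intro x hx
    simp only [Finset.mem_image] at hx
    obtain ⟨c, _, rfl⟩ := hx
    exact Finset.mem_range.mpr (Nat.mod_lt _ hpos)
  · rw [Finset.card_image_of_injOn (inj_on n)]

lemma numer (n : ℕ) :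
    ∑ b ∈ Finset.range (2 ^ (n + 1)), (3 : ℚ) ^ m b (n + 1)
      = 4 * ∑ b ∈ Finset.range (2 ^ n), (3 : ℚ) ^ m b n := by
  have h2 : (2 : ℕ) ^ (n + 1) = 2 * 2 ^ n := by ring
  rw [h2, sum_range_two_mul (fun b => (3 : ℚ) ^ m b (n + 1))]
  have key : ∀ c, (3 : ℚ) ^ m (2 * c) (n + 1) + (3 : ℚ) ^ m (2 * c + 1) (n + 1)
      = (3 : ℚ) ^ m c n + 3 * (3 : ℚ) ^ m ((3 * c + 2) % 2 ^ n) n := by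
    intro c
    have hev : m (2 * c) (n + 1) = m c n := by
      rw [m_succ]
      have h : ¬ Odd (2 * c) := by simp [Nat.odd_iff]
      rw [if_neg h, T_even, zero_add]
    have hod : m (2 * c + 1) (n + 1) = 1 + m ((3 * c + 2) % 2 ^ n) n := by
      rw [m_succ]
      have h : Odd (2 * c + 1) := by simp [Nat.odd_iff]
      rw [if_pos h, T_odd, ← m_mod]
    rw [hev, hod, pow_add, pow_one]
    try ring
  rw [Finset.sum_congr rfl (fun c _ => key c), Finset.sum_add_distrib, ← Finset.mul_sum]
  have himg : ∑ c ∈ Finset.range (2 ^ n), (3 : ℚ) ^ m ((3 * c + 2) % 2 ^ n) n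
      = ∑ b ∈ Finset.range (2 ^ n), (3 : ℚ) ^ m b n := by
    conv_rhs => rw [← image_eq n]
    rw [Finset.sum_image (fun a ha b hb hab => inj_on n (by simpa using ha) (by simpa using hb) hab)]
  rw [himg]
  ring

theorem stmt10 : ∀ n ≥ 1,
    ∑ b ∈ Finset.range (2 ^ (n + 1)), ((3 : ℚ) ^ m b (n + 1) / 2 ^ (n + 1))
      = 2 * ∑ b ∈ Finset.range (2 ^ n), ((3 : ℚ) ^ m b n / 2 ^ n) := by
  intro n _
  rw [← Finset.sum_div, ← Finset.sum_div, numer n]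
  field_simp
  ring
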